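/- Let (p₁, A₁⁺, A₁⁻, Φ₁⁺, Φ₁⁻) and (p₂, A₂⁺, A₂⁻, Φ₂⁺, Φ₂⁻) be two coordinate quasi-Codazzi setups on the same U, and let F⁺, F⁻ : U → (ℝⁿ →ₗ[ℝ] ℝⁿ) be smooth maps with F± x invertible for every x, such that: (i) F± x ∘ Φ₁± x = Φ₂± x for all x; (ii) p₁ x a b = p₂ x (F⁺ x a) (F⁻ x b) for all x, a, b; (iii) for every smooth section ν : U → ℝⁿ and vector field X, F±((∇₁±_X ν)) = ∇₂±_X(F±ν), where (F±ν)(x) := F± x (ν x). Then: (1) F⁺ x ∘ R_{A₁⁺}(x)(v,w) = R_{A₂⁺}(x)(v,w) ∘ F⁺ x and F⁻ x ∘ R_{A₁⁻}(x)(v,w) = R_{A₂⁻}(x)(v,w) ∘ F⁻ x for all x, v, w; (2) h₁ x y z = h₂ x y z for all x, y, z; (3) C₁(X,Y,Z) = C₂(X,Y,Z) for all smooth vector fields X, Y, Z. (Paper's Proposition 3.24: invariants of isomorphic quasi-Codazzi structures.) -/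

import Mathlib

noncomputable section

open Set

/-- ℝⁿ. -/
abbrev Vn (n : ℕ) : Type := Fin n → ℝ

/-- Pairings (fiber metrics pairing `E⁺` with `E⁻`) on the trivialized bundle. -/
abbrev Pairn (n : ℕ) : Type := Vn n →L[ℝ] Vn n →L[ℝ] ℝ

/-- Connection forms on the trivialized bundle. -/
abbrev Connn (n : ℕ) : Type := Vn n →L[ℝ] Vn n →L[ℝ] Vn n

/-- Bundle maps `TU → E±` in the trivialization. -/
abbrev Bdln (n : ℕ) : Type := Vn n →L[ℝ] Vn n

/-- Covariant derivative of the section `ν` along the vector field `X`,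
for the connection with connection form `A`. -/
def cov {n : ℕ} (A : Vn n → Connn n) (X ν : Vn n → Vn n) (x : Vn n) : Vn n :=
  fderiv ℝ ν x (X x) + A x (X x) (ν x)

/-- Lie bracket of vector fields on an open set of ℝⁿ. -/
def lieB {n : ℕ} (X Y : Vn n → Vn n) (x : Vn n) : Vn n :=
  fderiv ℝ Y x (X x) - fderiv ℝ X x (Y x)

/-- The section `Φ±Y : x ↦ Φ± x (Y x)`. -/
def secPhi {n : ℕ} (Φ : Vn n → Bdln n) (Y : Vn n → Vn n) : Vn n → Vn n :=
  fun x => Φ x (Y x)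

/-- The induced (possibly degenerate) metric `h x y z = 2 p x (Φ⁺ x y) (Φ⁻ x z)`. -/
def hmet {n : ℕ} (p : Vn n → Pairn n) (Φp Φm : Vn n → Bdln n) (x y z : Vn n) : ℝ :=
  2 * p x (Φp x y) (Φm x z)

/-- The generalized Amari–Chentsov cubic tensor. -/
def Ctensor {n : ℕ} (p : Vn n → Pairn n) (Ap Am : Vn n → Connn n)
    (Φp Φm : Vn n → Bdln n) (X Y Z : Vn n → Vn n) (x : Vn n) : ℝ :=
  -2 * (p x (cov Ap X (secPhi Φp Y) x) (Φm x (Z x))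
        - p x (Φp x (Z x)) (cov Am X (secPhi Φm Y) x))

/-- The relative torsion `T(X,Y) = ∇_X(ΦY) − ∇_Y(ΦX) − Φ[X,Y]`. -/
def Ttor {n : ℕ} (A : Vn n → Connn n) (Φ : Vn n → Bdln n)
    (X Y : Vn n → Vn n) (x : Vn n) : Vn n :=
  cov A X (secPhi Φ Y) x - cov A Y (secPhi Φ X) x - Φ x (lieB X Y x)

/-- The Kossowski pseudo-connection. -/
def Koss {n : ℕ} (p : Vn n → Pairn n) (Φp Φm : Vn n → Bdln n)
    (X Y Z : Vn n → Vn n) (x : Vn n) : ℝ :=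
  fderiv ℝ (fun y => p y (Φp y (Y y)) (Φm y (Z y))) x (X x)
  + fderiv ℝ (fun y => p y (Φp y (Z y)) (Φm y (X y))) x (Y x)
  - fderiv ℝ (fun y => p y (Φp y (X y)) (Φm y (Y y))) x (Z x)
  - p x (Φp x (X x)) (Φm x (lieB Y Z x))
  + p x (Φp x (Y x)) (Φm x (lieB Z X x))
  + p x (Φp x (Z x)) (Φm x (lieB X Y x))

/-- The curvature of a connection form `A` at `x` in directions `v`, `w`. -/
def curvA {n : ℕ} (A : Vn n → Connn n) (x v w : Vn n) : Vn n →L[ℝ] Vn n :=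
  fderiv ℝ A x v w - fderiv ℝ A x w v + (A x v).comp (A x w) - (A x w).comp (A x v)

/-- congruence of cov under local equality -/
lemma cov_congr_nhds {n : ℕ} {A : Vn n → Connn n} {X g g' : Vn n → Vn n} {x : Vn n}
    (h : g =ᶠ[nhds x] g') : cov A X g x = cov A X g' x := by
  unfold cov
  rw [h.fderiv_eq, h.eq_of_nhds]

/-- fderiv of a clm-valued map applied to a constant -/
lemma fd_app1 {n : ℕ} {F : Vn n → Bdln n} {x : Vn n} (hF : DifferentiableAt ℝ F x)
    (a v : Vn n) : fderiv ℝ (fun y => F y a) x v = fderiv ℝ F x v a := by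
  rw [fderiv_clm_apply hF (differentiableAt_const a)]
  simp

lemma fd_app2 {n : ℕ} {A : Vn n → Connn n} {x : Vn n} (hA : DifferentiableAt ℝ A x)
    (w a v : Vn n) : fderiv ℝ (fun y => A y w a) x v = fderiv ℝ A x v w a := by
  have h2 : DifferentiableAt ℝ (fun y => A y w) x := hA.clm_apply (differentiableAt_const w)
  rw [fderiv_clm_apply h2 (differentiableAt_const a)]
  have h1 : fderiv ℝ (fun y => A y w) x v = fderiv ℝ A x v w := by
    rw [fderiv_clm_apply hA (differentiableAt_const w)]; simp
  simp [h1]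


lemma curv_intertwine {n : ℕ} (U : Set (Vn n)) (hU : IsOpen U)
    (A₁ A₂ : Vn n → Connn n) (F : Vn n → Bdln n)
    (hA₁ : ContDiffOn ℝ (⊤ : ℕ∞) A₁ U) (hA₂ : ContDiffOn ℝ (⊤ : ℕ∞) A₂ U)
    (hF : ContDiffOn ℝ (⊤ : ℕ∞) F U)
    (hcov : ∀ ν X : Vn n → Vn n,
      ContDiffOn ℝ (⊤ : ℕ∞) ν U → ContDiffOn ℝ (⊤ : ℕ∞) X U →
      ∀ x ∈ U, F x (cov A₁ X ν x) = cov A₂ X (fun y => F y (ν y)) x)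
    {x : Vn n} (hx : x ∈ U) (v w a : Vn n) :
    F x (curvA A₁ x v w a) = curvA A₂ x v w (F x a) := by
  have hxnhds : U ∈ nhds x := hU.mem_nhds hx
  -- differentiability facts
  have hA₁d : DifferentiableAt ℝ A₁ x := (hA₁.contDiffAt hxnhds).differentiableAt (by simp)
  have hA₂d : ∀ y ∈ U, DifferentiableAt ℝ A₂ y := fun y hy =>
    (hA₂.contDiffAt (hU.mem_nhds hy)).differentiableAt (by simp)
  set Fν : Vn n → Vn n := fun y => F y a with hFν
  have hFνsm : ContDiffOn ℝ (⊤ : ℕ∞) Fν U := hF.clm_apply contDiffOn_const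
  have hFνd : ∀ y ∈ U, DifferentiableAt ℝ Fν y := fun y hy =>
    (hFνsm.contDiffAt (hU.mem_nhds hy)).differentiableAt (by simp)
  have hDFνsm : ContDiffOn ℝ (⊤ : ℕ∞) (fun y => fderiv ℝ Fν y) U :=
    hFνsm.fderiv_of_isOpen hU (by exact_mod_cast le_top)
  have hDFνd : DifferentiableAt ℝ (fun y => fderiv ℝ Fν y) x :=
    (hDFνsm.contDiffAt hxnhds).differentiableAt (by simp)
  -- second derivative symmetry
  have hsymm : ∀ v w : Vn n, fderiv ℝ (fderiv ℝ Fν) x v w = fderiv ℝ (fderiv ℝ Fν) x w v := by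
    have h2 : ContDiffAt ℝ 2 Fν x := (hFνsm.contDiffAt hxnhds).of_le (by decide)
    exact fun v w => (h2.isSymmSndFDerivAt (by norm_num)).eq v w
  -- key expansion as a function of (v, w)
  have key : ∀ v w : Vn n,
      F x (fderiv ℝ A₁ x v w a + A₁ x v (A₁ x w a))
        = fderiv ℝ (fderiv ℝ Fν) x v w + fderiv ℝ A₂ x v w (Fν x)
          + A₂ x w (fderiv ℝ Fν x v) + A₂ x v (fderiv ℝ Fν x w)
          + A₂ x v (A₂ x w (Fν x)) := by
    intro v w
    set ν₁ : Vn n → Vn n := fun y => A₁ y w a with hν₁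
    have hν₁sm : ContDiffOn ℝ (⊤ : ℕ∞) ν₁ U :=
      (hA₁.clm_apply contDiffOn_const).clm_apply contDiffOn_const
    -- Step 1: F y (ν₁ y) = cov A₂ (const w) Fν y on U
    have step1 : ∀ y ∈ U, F y (ν₁ y) = cov A₂ (fun _ => w) Fν y := by
      intro y hy
      have := hcov (fun _ => a) (fun _ => w) contDiffOn_const contDiffOn_const y hy
      simpa [cov, hν₁] using this
    -- Step 2: apply hcov to ν₁ and const v
    have step2 := hcov ν₁ (fun _ => v) hν₁sm contDiffOn_const x hx
    have heq : (fun y => F y (ν₁ y)) =ᶠ[nhds x] (fun y => cov A₂ (fun _ => w) Fν y) :=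
      Filter.eventuallyEq_of_mem hxnhds step1
    rw [cov_congr_nhds heq] at step2
    -- LHS of step2
    have hLHS : cov A₁ (fun _ => v) ν₁ x = fderiv ℝ A₁ x v w a + A₁ x v (A₁ x w a) := by
      simp [cov, hν₁, fd_app2 hA₁d]
    -- RHS: expand cov A₂ (const v) (cov A₂ (const w) Fν) x
    have hG : (fun y => cov A₂ (fun _ => w) Fν y)
        = fun y => fderiv ℝ Fν y w + A₂ y w (Fν y) := by
      funext y; simp [cov]
    have hg₁d : DifferentiableAt ℝ (fun y => fderiv ℝ Fν y w) x :=
      hDFνd.clm_apply (differentiableAt_const w)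
    have hA₂wd : DifferentiableAt ℝ (fun y => A₂ y w) x :=
      (hA₂d x hx).clm_apply (differentiableAt_const w)
    have hg₂d : DifferentiableAt ℝ (fun y => A₂ y w (Fν y)) x :=
      hA₂wd.clm_apply (hFνd x hx)
    have hfd1 : fderiv ℝ (fun y => fderiv ℝ Fν y w) x v = fderiv ℝ (fderiv ℝ Fν) x v w :=
      fd_app1 (F := fun y => fderiv ℝ Fν y) hDFνd w v
    have hfd2 : fderiv ℝ (fun y => A₂ y w (Fν y)) x v
        = A₂ x w (fderiv ℝ Fν x v) + fderiv ℝ A₂ x v w (Fν x) := by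
      rw [fderiv_clm_apply hA₂wd (hFνd x hx)]
      have : fderiv ℝ (fun y => A₂ y w) x v = fderiv ℝ A₂ x v w := by
        rw [fderiv_clm_apply (hA₂d x hx) (differentiableAt_const w)]; simp
      simp [this]
    have hRHS : cov A₂ (fun _ => v) (fun y => cov A₂ (fun _ => w) Fν y) x
        = fderiv ℝ (fderiv ℝ Fν) x v w + fderiv ℝ A₂ x v w (Fν x)
          + A₂ x w (fderiv ℝ Fν x v) + A₂ x v (fderiv ℝ Fν x w)
          + A₂ x v (A₂ x w (Fν x)) := by
      rw [hG]
      simp only [cov, fderiv_fun_add hg₁d hg₂d]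
      rw [ContinuousLinearMap.add_apply, hfd1, hfd2]
      simp only [map_add]
      abel
    rw [hLHS] at step2
    rw [step2, hRHS]
  have k1 := key v w
  have k2 := key w v
  have hFνx : Fν x = F x a := rfl
  have expand : curvA A₁ x v w a
      = (fderiv ℝ A₁ x v w a + A₁ x v (A₁ x w a)) - (fderiv ℝ A₁ x w v a + A₁ x w (A₁ x v a)) := by
    simp [curvA]; abel
  rw [expand, map_sub, k1, k2]
  simp only [curvA, hsymm v w, hFνx]
  simp only [ContinuousLinearMap.sub_apply, ContinuousLinearMap.add_apply,
    ContinuousLinearMap.comp_apply]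
  abel

/-- Paper's Proposition 3.24 (in a trivialization): if two coordinate quasi-Codazzi
setups on `U` are isomorphic via pointwise invertible smooth maps `F⁺`, `F⁻`
(intertwining the bundle maps, the pairings and the connections), then:
(1) `F±` intertwines the curvatures, (2) the induced metrics agree, and
(3) the generalized cubic tensors agree. -/
theorem statement16 {n : ℕ} (U : Set (Vn n)) (hUopen : IsOpen U)
    -- first coordinate quasi-Codazzi setup
    (p₁ : Vn n → Pairn n) (hp₁smooth : ContDiffOn ℝ (⊤ : ℕ∞) p₁ U)
    (A₁p A₁m : Vn n → Connn n)
    (hA₁psmooth : ContDiffOn ℝ (⊤ : ℕ∞) A₁p U) (hA₁msmooth : ContDiffOn ℝ (⊤ : ℕ∞) A₁m U)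
    (hdual₁ : ∀ x ∈ U, ∀ v a b : Vn n,
      fderiv ℝ p₁ x v a b = p₁ x (A₁p x v a) b + p₁ x a (A₁m x v b))
    (Φ₁p Φ₁m : Vn n → Bdln n)
    (hΦ₁psmooth : ContDiffOn ℝ (⊤ : ℕ∞) Φ₁p U) (hΦ₁msmooth : ContDiffOn ℝ (⊤ : ℕ∞) Φ₁m U)
    (hLag₁ : ∀ x ∈ U, ∀ y z : Vn n, p₁ x (Φ₁p x y) (Φ₁m x z) = p₁ x (Φ₁p x z) (Φ₁m x y))
    -- second coordinate quasi-Codazzi setup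
    (p₂ : Vn n → Pairn n) (hp₂smooth : ContDiffOn ℝ (⊤ : ℕ∞) p₂ U)
    (A₂p A₂m : Vn n → Connn n)
    (hA₂psmooth : ContDiffOn ℝ (⊤ : ℕ∞) A₂p U) (hA₂msmooth : ContDiffOn ℝ (⊤ : ℕ∞) A₂m U)
    (hdual₂ : ∀ x ∈ U, ∀ v a b : Vn n,
      fderiv ℝ p₂ x v a b = p₂ x (A₂p x v a) b + p₂ x a (A₂m x v b))
    (Φ₂p Φ₂m : Vn n → Bdln n)
    (hΦ₂psmooth : ContDiffOn ℝ (⊤ : ℕ∞) Φ₂p U) (hΦ₂msmooth : ContDiffOn ℝ (⊤ : ℕ∞) Φ₂m U)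
    (hLag₂ : ∀ x ∈ U, ∀ y z : Vn n, p₂ x (Φ₂p x y) (Φ₂m x z) = p₂ x (Φ₂p x z) (Φ₂m x y))
    -- the isomorphism (F⁺, F⁻)
    (Fp Fm : Vn n → Bdln n)
    (hFpsmooth : ContDiffOn ℝ (⊤ : ℕ∞) Fp U) (hFmsmooth : ContDiffOn ℝ (⊤ : ℕ∞) Fm U)
    (hFpbij : ∀ x ∈ U, Function.Bijective (Fp x))
    (hFmbij : ∀ x ∈ U, Function.Bijective (Fm x))
    -- (i) F± ∘ Φ₁± = Φ₂±
    (hFΦp : ∀ x ∈ U, ∀ v : Vn n, Fp x (Φ₁p x v) = Φ₂p x v)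
    (hFΦm : ∀ x ∈ U, ∀ v : Vn n, Fm x (Φ₁m x v) = Φ₂m x v)
    -- (ii) p₁ = p₂ ∘ (F⁺ × F⁻)
    (hFpair : ∀ x ∈ U, ∀ a b : Vn n, p₁ x a b = p₂ x (Fp x a) (Fm x b))
    -- (iii) F± intertwines the covariant derivatives
    (hFcovp : ∀ ν X : Vn n → Vn n,
      ContDiffOn ℝ (⊤ : ℕ∞) ν U → ContDiffOn ℝ (⊤ : ℕ∞) X U →
      ∀ x ∈ U, Fp x (cov A₁p X ν x) = cov A₂p X (fun y => Fp y (ν y)) x)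
    (hFcovm : ∀ ν X : Vn n → Vn n,
      ContDiffOn ℝ (⊤ : ℕ∞) ν U → ContDiffOn ℝ (⊤ : ℕ∞) X U →
      ∀ x ∈ U, Fm x (cov A₁m X ν x) = cov A₂m X (fun y => Fm y (ν y)) x) :
    -- (1) F± intertwines the curvatures
    (∀ x ∈ U, ∀ v w a : Vn n,
      Fp x (curvA A₁p x v w a) = curvA A₂p x v w (Fp x a) ∧
      Fm x (curvA A₁m x v w a) = curvA A₂m x v w (Fm x a)) ∧
    -- (2) the induced metrics agree
    (∀ x ∈ U, ∀ y z : Vn n, hmet p₁ Φ₁p Φ₁m x y z = hmet p₂ Φ₂p Φ₂m x y z) ∧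
    -- (3) the generalized cubic tensors agree
    (∀ X Y Z : Vn n → Vn n,
      ContDiffOn ℝ (⊤ : ℕ∞) X U → ContDiffOn ℝ (⊤ : ℕ∞) Y U → ContDiffOn ℝ (⊤ : ℕ∞) Z U →
      ∀ x ∈ U,
        Ctensor p₁ A₁p A₁m Φ₁p Φ₁m X Y Z x = Ctensor p₂ A₂p A₂m Φ₂p Φ₂m X Y Z x) := by
  refine ⟨?_, ?_, ?_⟩
  · intro x hx v w a
    exact ⟨curv_intertwine U hUopen A₁p A₂p Fp hA₁psmooth hA₂psmooth hFpsmooth hFcovp hx v w a,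
           curv_intertwine U hUopen A₁m A₂m Fm hA₁msmooth hA₂msmooth hFmsmooth hFcovm hx v w a⟩
  · intro x hx y z
    simp only [hmet]
    rw [hFpair x hx, hFΦp x hx, hFΦm x hx]
  · intro X Y Z hX hY hZ x hx
    have h1 : p₁ x (cov A₁p X (secPhi Φ₁p Y) x) (Φ₁m x (Z x))
        = p₂ x (cov A₂p X (secPhi Φ₂p Y) x) (Φ₂m x (Z x)) := by
      rw [hFpair x hx, hFΦm x hx,
        hFcovp (secPhi Φ₁p Y) X (hΦ₁psmooth.clm_apply hY) hX x hx,
        cov_congr_nhds (Filter.eventuallyEq_of_mem (hUopen.mem_nhds hx)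
          (fun y hy => by simpa [secPhi] using hFΦp y hy (Y y)))]
      rfl
    have h2 : p₁ x (Φ₁p x (Z x)) (cov A₁m X (secPhi Φ₁m Y) x)
        = p₂ x (Φ₂p x (Z x)) (cov A₂m X (secPhi Φ₂m Y) x) := by
      rw [hFpair x hx, hFΦp x hx,
        hFcovm (secPhi Φ₁m Y) X (hΦ₁msmooth.clm_apply hY) hX x hx,
        cov_congr_nhds (Filter.eventuallyEq_of_mem (hUopen.mem_nhds hx)
          (fun y hy => by simpa [secPhi] using hFΦm y hy (Y y)))]
      rfl
    simp only [Ctensor, h1, h2]
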